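/- arXiv:1110.2114 — 3 statements merged into one kernel-verified Lean document; each statement's English description precedes it below -/
import Mathlib

section
/- For every real number y ≥ 0 there exists a unique x ∈ [0, 2·arsinh(1)) such that F(x) = y, where F(x) = x/2 + arsinh( sinh(x/2) / √(1 − sinh²(x/2)) ). In other words, F maps [0, 2·arsinh(1)) bijectively onto [0, ∞). -/
open Real

private noncomputable def Fa (x : ℝ) : ℝ :=
  x / 2 + Real.arsinh (Real.sinh (x / 2) / Real.sqrt (1 - Real.sinh (x / 2) ^ 2))

private lemma Fa_mono {a b : ℝ} (ha : 0 ≤ a) (hab : a < b) (hb : b < 2 * Real.arsinh 1) :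
    Fa a < Fa b := by
  have hsa : 0 ≤ Real.sinh (a / 2) := Real.sinh_nonneg_iff.mpr (by linarith)
  have hsab : Real.sinh (a / 2) < Real.sinh (b / 2) := Real.sinh_lt_sinh.mpr (by linarith)
  have hsb : Real.sinh (b / 2) < 1 := by
    have := Real.sinh_lt_sinh.mpr (show b / 2 < Real.arsinh 1 by linarith)
    simpa [Real.sinh_arsinh] using this
  have hda : 0 < 1 - Real.sinh (b / 2) ^ 2 := by nlinarith
  have h1 : 0 < Real.sqrt (1 - Real.sinh (b / 2) ^ 2) := Real.sqrt_pos.mpr hda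
  have h2 : Real.sqrt (1 - Real.sinh (b / 2) ^ 2) ≤ Real.sqrt (1 - Real.sinh (a / 2) ^ 2) :=
    Real.sqrt_le_sqrt (by nlinarith)
  have hratio : Real.sinh (a / 2) / Real.sqrt (1 - Real.sinh (a / 2) ^ 2)
      < Real.sinh (b / 2) / Real.sqrt (1 - Real.sinh (b / 2) ^ 2) :=
    div_lt_div₀ hsab h2 (hsa.trans hsab.le) h1
  have harc := Real.arsinh_lt_arsinh.mpr hratio
  unfold Fa
  linarith

/-- for every `y ≥ 0` there is a unique `x ∈ [0, 2·arsinh 1)` with `F x = y`,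
where `F(x) = x/2 + arsinh(sinh(x/2)/√(1 − sinh²(x/2)))`. -/
theorem stmt_3 (y : ℝ) (hy : 0 ≤ y) :
    ∃! x : ℝ, x ∈ Set.Ico 0 (2 * Real.arsinh 1) ∧
      x / 2 + Real.arsinh (Real.sinh (x / 2) / Real.sqrt (1 - Real.sinh (x / 2) ^ 2)) = y := by
  set x₀ : ℝ := 2 * Real.arsinh (Real.tanh y) with hx₀def
  have hcosh : (0:ℝ) < Real.cosh y := Real.cosh_pos y
  have hsy : 0 ≤ Real.sinh y := Real.sinh_nonneg_iff.mpr hy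
  have htnn : 0 ≤ Real.tanh y := by
    rw [Real.tanh_eq_sinh_div_cosh]; positivity
  have htlt : Real.tanh y < 1 := by
    rw [Real.tanh_eq_sinh_div_cosh, div_lt_one hcosh]
    have := Real.cosh_sub_sinh y
    nlinarith [Real.exp_pos (-y)]
  have harsnn : 0 ≤ Real.arsinh (Real.tanh y) := Real.arsinh_nonneg_iff.mpr htnn
  have hx₀nn : 0 ≤ x₀ := by rw [hx₀def]; linarith
  have hx₀lt : x₀ < 2 * Real.arsinh 1 := by
    have := Real.arsinh_lt_arsinh.mpr htlt
    rw [hx₀def]; linarith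
  have hsinh_x₀ : Real.sinh (x₀ / 2) = Real.tanh y := by
    rw [hx₀def]; ring_nf; rw [Real.sinh_arsinh]
  have hsqrt : Real.sqrt (1 - Real.tanh y ^ 2) = 1 / Real.cosh y := by
    have h1 : 1 - Real.tanh y ^ 2 = (1 / Real.cosh y) ^ 2 := by
      rw [Real.tanh_eq_sinh_div_cosh]
      field_simp
      linarith [Real.cosh_sq y]
    rw [h1, Real.sqrt_sq (by positivity)]
  have hFx₀ : Fa x₀ = Real.arsinh (Real.tanh y) + y := by
    unfold Fa
    rw [hsinh_x₀, hsqrt]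
    have h2 : Real.tanh y / (1 / Real.cosh y) = Real.sinh y := by
      rw [Real.tanh_eq_sinh_div_cosh]; field_simp
    rw [h2, Real.arsinh_sinh, hx₀def]
    ring
  have hF0 : Fa 0 = 0 := by
    unfold Fa
    simp
  -- continuity on [0, x₀]
  have hcont : ContinuousOn Fa (Set.Icc 0 x₀) := by
    apply ContinuousOn.add (by fun_prop)
    apply Real.continuous_arsinh.comp_continuousOn
    apply ContinuousOn.div (by fun_prop) (by fun_prop)
    intro x hx
    obtain ⟨hx1, hx2⟩ := hx
    have hs1 : 0 ≤ Real.sinh (x / 2) := Real.sinh_nonneg_iff.mpr (by linarith)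
    have hs2 : Real.sinh (x / 2) ≤ Real.tanh y := by
      rw [← hsinh_x₀]
      exact Real.sinh_le_sinh.mpr (by linarith)
    have : 0 < 1 - Real.sinh (x / 2) ^ 2 := by nlinarith
    exact ne_of_gt (Real.sqrt_pos.mpr this)
  have hymem : y ∈ Set.Icc (Fa 0) (Fa x₀) := by
    rw [hF0, hFx₀]; exact ⟨hy, by linarith⟩
  obtain ⟨x, hxmem, hxval⟩ := intermediate_value_Icc hx₀nn hcont hymem
  unfold Fa at hxval
  refine ⟨x, ⟨⟨hxmem.1, lt_of_le_of_lt hxmem.2 hx₀lt⟩, hxval⟩, ?_⟩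
  rintro z ⟨⟨hz1, hz2⟩, hzval⟩
  by_contra hne
  have hx1 : 0 ≤ x := hxmem.1
  have hx2 : x < 2 * Real.arsinh 1 := lt_of_le_of_lt hxmem.2 hx₀lt
  rcases lt_or_gt_of_ne hne with h | h
  · have := Fa_mono hz1 h hx2
    simp only [Fa] at this
    rw [hzval, hxval] at this
    exact lt_irrefl y this
  · have := Fa_mono hx1 h hz2
    simp only [Fa] at this
    rw [hzval, hxval] at this
    exact lt_irrefl y this
end

section
/- For every x ∈ [0, 1), one has F(x) ≤ 2x, where F(x) = x/2 + arsinh( sinh(x/2) / √(1 − sinh²(x/2)) ). (For such x one has sinh(x/2) < 1, so F is well defined.) -/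
open Real

/-- for every `x ∈ [0,1)`, `F(x) ≤ 2x`, where
`F(x) = x/2 + arsinh(sinh(x/2)/√(1 − sinh²(x/2)))`. -/
theorem stmt_4 (x : ℝ) (hx : x ∈ Set.Ico (0 : ℝ) 1) :
    x / 2 + Real.arsinh (Real.sinh (x / 2) / Real.sqrt (1 - Real.sinh (x / 2) ^ 2)) ≤ 2 * x := by
  obtain ⟨hx0, hx1⟩ := hx
  set t := x / 2 with ht
  set s := Real.sinh t with hs
  have hs0 : 0 ≤ s := by rw [hs, ← Real.sinh_zero]; exact Real.sinh_le_sinh.2 (by positivity)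
  -- bound s ≤ exp(1/2)/2 < 1, s^2 ≤ 3/4
  have hsle : s ≤ Real.exp (1/2) / 2 := by
    have : s ≤ Real.sinh (1/2) := Real.sinh_le_sinh.2 (by linarith)
    have h2 : Real.sinh (1/2) ≤ Real.exp (1/2) / 2 := by
      rw [Real.sinh_eq]
      have := Real.exp_pos (-(1/2 : ℝ))
      linarith
    linarith
  have hexp : Real.exp (1/2 : ℝ) < 2 := by
    have h : Real.exp (1/2 : ℝ) ^ 2 < 2 ^ 2 := by
      rw [← Real.exp_nat_mul]
      norm_num
      calc Real.exp (1 : ℝ) < 2.7182818286 := Real.exp_one_lt_d9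
        _ < 4 := by norm_num
    exact lt_of_pow_lt_pow_left₀ 2 (by norm_num) h
  have hs1 : s < 1 := lt_of_le_of_lt hsle (by linarith)
  have hsq : s ^ 2 ≤ 3 / 4 := by
    have h : s ^ 2 ≤ (Real.exp (1/2) / 2) ^ 2 := by
      apply pow_le_pow_left₀ hs0 hsle
    have h2 : (Real.exp (1/2) / 2) ^ 2 = Real.exp 1 / 4 := by
      rw [div_pow, ← Real.exp_nat_mul]
      norm_num
    have he : Real.exp (1 : ℝ) < 3 := by
      calc Real.exp (1 : ℝ) < 2.7182818286 := Real.exp_one_lt_d9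
        _ < 3 := by norm_num
    rw [h2] at h
    linarith
  have hpos : (0 : ℝ) < 1 - s ^ 2 := by nlinarith
  have hsqrt : (1 : ℝ) / 3 ≤ Real.sqrt (1 - s ^ 2) := by
    rw [show (1:ℝ)/3 = Real.sqrt ((1/3)^2) by rw [Real.sqrt_sq]; norm_num]
    apply Real.sqrt_le_sqrt
    nlinarith
  have hsqrtpos : (0 : ℝ) < Real.sqrt (1 - s ^ 2) := by linarith
  -- s / sqrt(1-s^2) ≤ 3 s ≤ sinh (3 t)
  have key : s / Real.sqrt (1 - s ^ 2) ≤ Real.sinh (3 * t) := by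
    have h1 : s / Real.sqrt (1 - s ^ 2) ≤ 3 * s := by
      rw [div_le_iff₀ hsqrtpos]
      nlinarith
    have h2 : Real.sinh (3 * t) = 4 * s ^ 3 + 3 * s := Real.sinh_three_mul t
    nlinarith
  have harsinh : Real.arsinh (s / Real.sqrt (1 - s ^ 2)) ≤ 3 * t := by
    calc Real.arsinh (s / Real.sqrt (1 - s ^ 2)) ≤ Real.arsinh (Real.sinh (3 * t)) :=
          Real.arsinh_le_arsinh.2 key
      _ = 3 * t := Real.arsinh_sinh _
  have : 3 * t = 3 * x / 2 := by rw [ht]; ring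
  linarith
end

section
/- For every real number x > 0 and every y ∈ (0, 2·arsinh(1)) satisfying F(y) = x, one has 2π·⌈1/y⌉ ≤ 4π/x + 2π, where ⌈·⌉ denotes the ceiling function and F(y) = y/2 + arsinh( sinh(y/2) / √(1 − sinh²(y/2)) ). -/
open Real

/-- for every `x > 0` and every `y ∈ (0, 2·arsinh 1)` with `F y = x`,
`2π·⌈1/y⌉ ≤ 4π/x + 2π`, where
`F(y) = y/2 + arsinh(sinh(y/2)/√(1 − sinh²(y/2)))`. -/
theorem stmt_5 (x : ℝ) (hx : 0 < x) (y : ℝ) (hy : y ∈ Set.Ioo 0 (2 * Real.arsinh 1))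
    (hF : y / 2 + Real.arsinh (Real.sinh (y / 2) / Real.sqrt (1 - Real.sinh (y / 2) ^ 2)) = x) :
    2 * π * (⌈1 / y⌉ : ℝ) ≤ 4 * π / x + 2 * π := by
  obtain ⟨hy0, hy2⟩ := hy
  have hπ := Real.pi_pos
  rcases le_or_gt 1 y with h1 | h1
  · -- easy case: y ≥ 1, so ⌈1/y⌉ ≤ 1
    have hle : (1 : ℝ) / y ≤ ((1 : ℤ) : ℝ) := by
      push_cast
      rw [div_le_one hy0]; exact h1
    have hceil : ⌈(1 : ℝ) / y⌉ ≤ 1 := Int.ceil_le.mpr hle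
    have hceilR : ((⌈(1 : ℝ) / y⌉ : ℤ) : ℝ) ≤ 1 := by exact_mod_cast hceil
    have h4 : 0 < 4 * π / x := by positivity
    nlinarith
  · -- hard case: y < 1, show x ≤ 2y
    set s := Real.sinh (y / 2) with hs
    have hu0 : 0 < y / 2 := by linarith
    have hs0 : 0 < s := Real.sinh_pos_iff.mpr hu0
    -- s < sinh(1/2) ≤ exp(1/2)/2 ≤ 0.9
    have hsmall : s < 0.9 := by
      have h1' : y / 2 < 1 / 2 := by linarith
      have : s < Real.sinh (1 / 2) := Real.sinh_lt_sinh.mpr h1'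
      have he : Real.exp (1 / 2) < 1.7 := by
        have hq : Real.exp (1 / 2) * Real.exp (1 / 2) = Real.exp 1 := by
          rw [← Real.exp_add]; norm_num
        nlinarith [Real.exp_pos (1/2 : ℝ), Real.exp_one_lt_d9]
      have hsinh : Real.sinh (1 / 2) < 0.9 := by
        rw [Real.sinh_eq]
        have := Real.exp_pos (-(1/2) : ℝ)
        nlinarith
      linarith
    have hs2 : s ^ 2 < 1 := by nlinarith
    have hsq : Real.sqrt (1 - s ^ 2) ≥ 1 / 3 := by
      have : (1 : ℝ) / 3 = Real.sqrt (1 / 9) := by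
        rw [show (1:ℝ)/9 = (1/3)^2 by norm_num, Real.sqrt_sq (by norm_num)]
      rw [this]
      apply Real.sqrt_le_sqrt
      nlinarith
    have hsqpos : 0 < Real.sqrt (1 - s ^ 2) := by linarith
    -- s / √(1-s²) ≤ 3 s ≤ sinh(3(y/2))
    have ht3 : s / Real.sqrt (1 - s ^ 2) ≤ 3 * s := by
      rw [div_le_iff₀ hsqpos]
      nlinarith
    have hsinh3 : 3 * s ≤ Real.sinh (3 * (y / 2)) := by
      have h3 : (3 : ℝ) * (y / 2) = y / 2 + y / 2 + y / 2 := by ring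
      rw [h3, Real.sinh_add, Real.sinh_add, Real.cosh_add]
      have hc := Real.one_le_cosh (y / 2)
      have hc2 : 0 ≤ s * (Real.cosh (y / 2) * Real.cosh (y / 2) - 1) :=
        mul_nonneg hs0.le (by nlinarith)
      have hs3 : 0 ≤ s * (s * s) := by positivity
      rw [← hs]
      nlinarith
    have harsinh : Real.arsinh (s / Real.sqrt (1 - s ^ 2)) ≤ 3 * (y / 2) := by
      calc Real.arsinh (s / Real.sqrt (1 - s ^ 2))
          ≤ Real.arsinh (Real.sinh (3 * (y / 2))) :=
            Real.arsinh_le_arsinh.mpr (le_trans ht3 hsinh3)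
        _ = 3 * (y / 2) := Real.arsinh_sinh _
    have hx2y : x ≤ 2 * y := by
      rw [← hF]; linarith
    -- conclude
    have hceil : ((⌈(1 : ℝ) / y⌉ : ℤ) : ℝ) ≤ 1 / y + 1 := by
      have := Int.ceil_lt_add_one ((1 : ℝ) / y)
      linarith
    have h1y : 1 / y ≤ 2 / x := by
      rw [div_le_div_iff₀ hy0 hx]
      linarith
    have : ((⌈(1 : ℝ) / y⌉ : ℤ) : ℝ) ≤ 2 / x + 1 := by linarith
    have h2 : 2 * π * (2 / x + 1) = 4 * π / x + 2 * π := by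
      field_simp; ring
    nlinarith
end
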